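/- Let f ∈ C¹[a,b] have a derivative f' with finitely many zeros, and let g ∈ C¹[a,b] with g' > 0 on [a,b]. For each n let LS_opt(n) be the maximum over all n-point partitions Δ of [a,b] of the lower Riemann–Stieltjes sum Σᵢ (min_{[tᵢ₋₁,tᵢ]} f)(g(tᵢ) − g(tᵢ₋₁)). Then limsup_{n→∞} n·(∫ₐᵇ f dg − LS_opt(n)) ≤ (1/2)(∫ₐᵇ √(|f'(t)| g'(t)) dt)². -/

import Mathlib

open Set intervalIntegral Filter

lemma sqrt_add_le' {x y : ℝ} (hx : 0 ≤ x) (hy : 0 ≤ y) :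
    Real.sqrt (x + y) ≤ Real.sqrt x + Real.sqrt y := by
  rw [show Real.sqrt x + Real.sqrt y = Real.sqrt ((Real.sqrt x + Real.sqrt y)^2) by
    rw [Real.sqrt_sq (by positivity)]]
  apply Real.sqrt_le_sqrt
  nlinarith [Real.sq_sqrt hx, Real.sq_sqrt hy, Real.sqrt_nonneg x, Real.sqrt_nonneg y]

/-- FTC for g on a subinterval. -/
lemma gdiff_eq {g g' : ℝ → ℝ} {u v : ℝ} (huv : u ≤ v)
    (hg : ∀ t ∈ Icc u v, HasDerivWithinAt g (g' t) (Icc u v) t)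
    (hg'c : ContinuousOn g' (Icc u v)) :
    g v - g u = ∫ t in u..v, g' t := by
  symm
  apply integral_eq_sub_of_hasDeriv_right_of_le huv
    (fun t ht => (hg t ht).continuousWithinAt)
    (fun x hx => ((hg x (Ioo_subset_Icc_self hx)).hasDerivAt
      (Icc_mem_nhds hx.1 hx.2)).hasDerivWithinAt)
    (hg'c.intervalIntegrable_of_Icc huv)

/-- ∫_u^v |t - ξ| dt ≤ (v-u)²/2 when u ≤ ξ ≤ v. -/
lemma abs_integral_le {u v ξ : ℝ} (h1 : u ≤ ξ) (h2 : ξ ≤ v) :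
    (∫ t in u..v, |t - ξ|) ≤ (v - u)^2 / 2 := by
  have hint1 : IntervalIntegrable (fun t => |t - ξ|) MeasureTheory.volume u ξ :=
    (Continuous.continuousOn (by continuity)).intervalIntegrable
  have hint2 : IntervalIntegrable (fun t => |t - ξ|) MeasureTheory.volume ξ v :=
    (Continuous.continuousOn (by continuity)).intervalIntegrable
  have hsplit : (∫ t in u..v, |t - ξ|) = (∫ t in u..ξ, |t - ξ|) + ∫ t in ξ..v, |t - ξ| :=
    (integral_add_adjacent_intervals hint1 hint2).symm
  have e1 : (∫ t in u..ξ, |t - ξ|) = (ξ - u)^2 / 2 := by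
    rw [integral_congr (g := fun t => ξ - t) (fun t ht => by
      rw [uIcc_of_le h1] at ht
      rw [abs_of_nonpos (by linarith [ht.2])]; ring)]
    rw [integral_sub intervalIntegrable_const intervalIntegrable_id, integral_const, integral_id]
    simp [smul_eq_mul]; ring
  have e2 : (∫ t in ξ..v, |t - ξ|) = (v - ξ)^2 / 2 := by
    rw [integral_congr (g := fun t => t - ξ) (fun t ht => by
      rw [uIcc_of_le h2] at ht
      rw [abs_of_nonneg (by linarith [ht.1])])]
    rw [integral_sub intervalIntegrable_id intervalIntegrable_const, integral_const, integral_id]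
    simp [smul_eq_mul]; ring
  rw [hsplit, e1, e2]
  nlinarith

/-- Per-interval error bound. -/
lemma interval_error {f g f' g' : ℝ → ℝ} {u v : ℝ} (huv : u ≤ v)
    (hf : ∀ t ∈ Icc u v, HasDerivWithinAt f (f' t) (Icc u v) t)
    (hg : ∀ t ∈ Icc u v, HasDerivWithinAt g (g' t) (Icc u v) t)
    (hf'c : ContinuousOn f' (Icc u v)) (hg'c : ContinuousOn g' (Icc u v))
    (hg'0 : ∀ t ∈ Icc u v, 0 ≤ g' t)
    {M G : ℝ} (hM : ∀ t ∈ Icc u v, |f' t| ≤ M) (hG : ∀ t ∈ Icc u v, g' t ≤ G) :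
    (∫ t in u..v, f t * g' t) - sInf (f '' Icc u v) * (g v - g u)
      ≤ 1/2 * (M * G) * (v - u)^2 := by
  have hfc : ContinuousOn f (Icc u v) := fun t ht => (hf t ht).continuousWithinAt
  obtain ⟨ξ, hξ, hinf⟩ := isCompact_Icc.exists_sInf_image_eq (nonempty_Icc.2 huv) hfc
  have hM0 : 0 ≤ M := le_trans (abs_nonneg _) (hM ξ hξ)
  have hG0 : 0 ≤ G := le_trans (hg'0 ξ hξ) (hG ξ hξ)
  have hgd : g v - g u = ∫ t in u..v, g' t := gdiff_eq huv hg hg'c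
  have hfg'int : IntervalIntegrable (fun t => f t * g' t) MeasureTheory.volume u v :=
    (hfc.mul hg'c).intervalIntegrable_of_Icc huv
  have hg'int : IntervalIntegrable g' MeasureTheory.volume u v :=
    hg'c.intervalIntegrable_of_Icc huv
  have key : (∫ t in u..v, f t * g' t) - sInf (f '' Icc u v) * (g v - g u)
      = ∫ t in u..v, (f t - f ξ) * g' t := by
    rw [hinf, hgd, ← integral_const_mul,
      ← integral_sub hfg'int (hg'int.const_mul (f ξ))]
    congr 1; ext t; ring
  rw [key]
  have hbound : ∀ t ∈ Icc u v, (f t - f ξ) * g' t ≤ M * G * |t - ξ| := by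
    intro t ht
    have h1 : f t - f ξ ≤ M * |t - ξ| := by
      have := Convex.norm_image_sub_le_of_norm_hasDerivWithin_le (𝕜 := ℝ)
        hf (fun x hx => by simpa using hM x hx) (convex_Icc u v) hξ ht
      rw [Real.norm_eq_abs, Real.norm_eq_abs] at this
      exact le_trans (le_abs_self _) this
    have h2 : 0 ≤ g' t := hg'0 t ht
    have h3 : g' t ≤ G := hG t ht
    calc (f t - f ξ) * g' t ≤ M * |t - ξ| * g' t := mul_le_mul_of_nonneg_right h1 h2
      _ ≤ M * |t - ξ| * G := mul_le_mul_of_nonneg_left h3 (by positivity)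
      _ = M * G * |t - ξ| := by ring
  calc (∫ t in u..v, (f t - f ξ) * g' t) ≤ ∫ t in u..v, M * G * |t - ξ| := by
        apply integral_mono_on huv _ _ hbound
        · exact ((hfc.sub continuousOn_const).mul hg'c).intervalIntegrable_of_Icc huv
        · exact ((Continuous.continuousOn (by continuity)).intervalIntegrable)
    _ = M * G * ∫ t in u..v, |t - ξ| := integral_const_mul _ _
    _ ≤ M * G * ((v - u)^2 / 2) := by
        apply mul_le_mul_of_nonneg_left (abs_integral_le hξ.1 hξ.2) (by positivity)
    _ = 1/2 * (M * G) * (v - u)^2 := by ring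


lemma lower_sum_le {a b : ℝ} {f g g' : ℝ → ℝ} (hab : a ≤ b)
    (hfc : ContinuousOn f (Icc a b))
    (hg : ∀ t ∈ Icc a b, HasDerivWithinAt g (g' t) (Icc a b) t)
    (hg'c : ContinuousOn g' (Icc a b))
    (hg'0 : ∀ t ∈ Icc a b, 0 ≤ g' t)
    (n : ℕ) (t : ℕ → ℝ) (ht0 : t 0 = a) (htn : t n = b)
    (hinc : ∀ i < n, t i < t (i + 1)) :
    (∑ i ∈ Finset.range n, sInf (f '' Icc (t i) (t (i + 1))) * (g (t (i + 1)) - g (t i)))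
      ≤ ∫ x in a..b, f x * g' x := by
  have hmono : ∀ i j, i ≤ j → j ≤ n → t i ≤ t j := by
    intro i j hij hjn
    induction j with
    | zero => simp_all
    | succ k ih =>
      rcases Nat.lt_or_ge i (k+1) with h | h
      · exact le_trans (ih (by omega) (by omega)) (hinc k (by omega)).le
      · have : i = k + 1 := by omega
        simp [this]
  have hsub : ∀ i, i < n → Icc (t i) (t (i+1)) ⊆ Icc a b := by
    intro i hi
    apply Icc_subset_Icc
    · rw [← ht0]; exact hmono 0 i (by omega) (by omega)
    · rw [← htn]; exact hmono (i+1) n (by omega) le_rfl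
  have hint : ∀ i < n, IntervalIntegrable (fun x => f x * g' x) MeasureTheory.volume (t i) (t (i+1)) := by
    intro i hi
    apply ContinuousOn.intervalIntegrable
    rw [uIcc_of_le (hinc i hi).le]
    exact (hfc.mul hg'c).mono (hsub i hi)
  have hsplit : (∑ i ∈ Finset.range n, ∫ x in t i..t (i+1), f x * g' x) = ∫ x in a..b, f x * g' x := by
    rw [intervalIntegral.sum_integral_adjacent_intervals hint, ht0, htn]
  rw [← hsplit]
  apply Finset.sum_le_sum
  intro i hi
  have hi' := Finset.mem_range.mp hi
  set u := t i with hu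
  set v := t (i+1) with hv
  have huv : u ≤ v := (hinc i hi').le
  have hsub' : Icc u v ⊆ Icc a b := hsub i hi'
  have hg'cuv : ContinuousOn g' (Icc u v) := hg'c.mono hsub'
  have hgd : g v - g u = ∫ x in u..v, g' x := by
    symm
    apply integral_eq_sub_of_hasDeriv_right_of_le huv
      (fun x hx => ((hg x (hsub' hx)).mono hsub').continuousWithinAt)
      (fun x hx => (((hg x (hsub' (Ioo_subset_Icc_self hx))).mono hsub').hasDerivAt
        (Icc_mem_nhds hx.1 hx.2)).hasDerivWithinAt)
      (hg'cuv.intervalIntegrable_of_Icc huv)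
  have hbdd : BddBelow (f '' Icc u v) :=
    (isCompact_Icc.image_of_continuousOn (hfc.mono hsub')).bddBelow
  have hminf : ∀ x ∈ Icc u v, sInf (f '' Icc u v) ≤ f x :=
    fun x hx => csInf_le hbdd (mem_image_of_mem f hx)
  rw [hgd, ← intervalIntegral.integral_const_mul]
  apply intervalIntegral.integral_mono_on huv
    ((continuousOn_const.mul hg'cuv).intervalIntegrable_of_Icc huv)
    ((hfc.mono hsub').mul hg'cuv |>.intervalIntegrable_of_Icc huv)
  intro x hx
  exact mul_le_mul_of_nonneg_right (hminf x hx) (hg'0 x (hsub' hx))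


lemma MG_bound_aux {M G p q ω K ρ : ℝ} (hmm : M * G ≤ (p + 2*ω) * (q + 2*ω))
    (hp : 0 ≤ p) (hq : 0 ≤ q) (hpK : p ≤ K) (hqK : q ≤ K) (hω : 0 ≤ ω)
    (hbound : 4*ω*K + 4*ω^2 ≤ ρ^2) : M * G ≤ p * q + ρ^2 := by nlinarith

lemma sq_step_aux {s Δ cc : ℝ} (hs : 0 ≤ s) (hΔ : 0 ≤ Δ) (hle : s * Δ ≤ cc) :
    1/2 * s^2 * Δ^2 ≤ 1/2 * cc^2 := by nlinarith [mul_nonneg hs hΔ]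


/-- The maximal lower Riemann–Stieltjes sum of `f` w.r.t. `g` over `n`-point partitions of `[a,b]`. -/
noncomputable def LSopt (a b : ℝ) (f g : ℝ → ℝ) (n : ℕ) : ℝ :=
  sSup {S : ℝ | ∃ t : ℕ → ℝ, t 0 = a ∧ t n = b ∧ (∀ i < n, t i < t (i + 1)) ∧
    S = ∑ i ∈ Finset.range n,
      sInf (f '' Set.Icc (t i) (t (i + 1))) * (g (t (i + 1)) - g (t i))}


set_option maxHeartbeats 2000000 in
/-- Upper estimate for the rate of convergence of the optimal lower Riemann–Stieltjes sums. -/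
theorem limsup_rate_upper
    (a b : ℝ) (hab : a < b) (f g f' g' : ℝ → ℝ)
    (hf : ∀ t ∈ Set.Icc a b, HasDerivWithinAt f (f' t) (Set.Icc a b) t)
    (hf' : ContinuousOn f' (Set.Icc a b))
    (hzeros : {t ∈ Set.Icc a b | f' t = 0}.Finite)
    (hg : ∀ t ∈ Set.Icc a b, HasDerivWithinAt g (g' t) (Set.Icc a b) t)
    (hg' : ContinuousOn g' (Set.Icc a b))
    (hgpos : ∀ t ∈ Set.Icc a b, 0 < g' t) :
    Filter.limsup
      (fun n : ℕ => (n : ℝ) * ((∫ t in a..b, f t * g' t) - LSopt a b f g n))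
      Filter.atTop ≤
      (1 / 2) * (∫ t in a..b, Real.sqrt (|f' t| * g' t)) ^ 2 := by
  have hab' : a ≤ b := hab.le
  have hfc : ContinuousOn f (Icc a b) := fun t ht => (hf t ht).continuousWithinAt
  have hg'0 : ∀ t ∈ Icc a b, 0 ≤ g' t := fun t ht => (hgpos t ht).le
  set I := ∫ t in a..b, f t * g' t with hI
  set A := ∫ t in a..b, Real.sqrt (|f' t| * g' t) with hA
  have hA0 : 0 ≤ A := intervalIntegral.integral_nonneg hab' (fun x _ => Real.sqrt_nonneg _)
  -- boundedness of the partition sums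
  have hbdd : ∀ n : ℕ, BddAbove {S : ℝ | ∃ t : ℕ → ℝ, t 0 = a ∧ t n = b ∧
      (∀ i < n, t i < t (i + 1)) ∧ S = ∑ i ∈ Finset.range n,
        sInf (f '' Set.Icc (t i) (t (i + 1))) * (g (t (i + 1)) - g (t i))} := by
    intro n
    refine ⟨I, fun S hS => ?_⟩
    obtain ⟨t, ht0, htn, hinc, rfl⟩ := hS
    exact lower_sum_le hab' hfc hg hg' hg'0 n t ht0 htn hinc
  -- nonemptiness for n ≥ 1 via the uniform partition
  have hne : ∀ n : ℕ, 1 ≤ n → {S : ℝ | ∃ t : ℕ → ℝ, t 0 = a ∧ t n = b ∧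
      (∀ i < n, t i < t (i + 1)) ∧ S = ∑ i ∈ Finset.range n,
        sInf (f '' Set.Icc (t i) (t (i + 1))) * (g (t (i + 1)) - g (t i))}.Nonempty := by
    intro n hn
    have hn0 : (n:ℝ) ≠ 0 := Nat.cast_ne_zero.2 (by omega)
    refine ⟨_, fun i => a + i * ((b - a)/n), by simp, by field_simp; ring, fun i hi => ?_, rfl⟩
    have hd : (0:ℝ) < (b - a)/n := div_pos (by linarith) (by positivity)
    have : (i:ℝ) < (i:ℝ) + 1 := by linarith
    push_cast
    nlinarith
  have hLS_le : ∀ n : ℕ, 1 ≤ n → LSopt a b f g n ≤ I := by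
    intro n hn
    apply csSup_le (hne n hn)
    rintro S ⟨t, ht0, htn, hinc, rfl⟩
    exact lower_sum_le hab' hfc hg hg' hg'0 n t ht0 htn hinc
  have hunn : ∀ n : ℕ, (0:ℝ) ≤ (n:ℝ) * (I - LSopt a b f g n) := by
    intro n
    rcases Nat.eq_zero_or_pos n with rfl | hn
    · simp
    · exact mul_nonneg (by positivity) (sub_nonneg.2 (hLS_le n hn))
  apply le_of_forall_pos_le_add
  intro ε hε
  apply Filter.limsup_le_of_le (Filter.isCoboundedUnder_le_of_le Filter.atTop hunn)
  -- constants
  obtain ⟨K1, hK1⟩ := isCompact_Icc.exists_bound_of_continuousOn hf'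
  obtain ⟨K2, hK2⟩ := isCompact_Icc.exists_bound_of_continuousOn hg'
  set K := max K1 K2 with hKdef
  have hK : ∀ t ∈ Icc a b, |f' t| ≤ K ∧ g' t ≤ K := by
    intro t ht
    refine ⟨le_trans ?_ (le_max_left K1 K2), le_trans ?_ (le_max_right K1 K2)⟩
    · simpa [Real.norm_eq_abs] using hK1 t ht
    · exact le_trans (le_abs_self _) (by simpa [Real.norm_eq_abs] using hK2 t ht)
  have hK0 : 0 ≤ K := le_trans (abs_nonneg _) (hK a (left_mem_Icc.2 hab')).1
  -- choose η
  have hden : 0 < 2 * ((b - a) * (A + (b - a)) + 1) := by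
    nlinarith [mul_pos (sub_pos.2 hab) (by linarith : (0:ℝ) < A + (b - a))]
  set η := min 1 (ε / (2 * ((b - a) * (A + (b - a)) + 1))) with hηdef
  have hη0 : 0 < η := lt_min one_pos (div_pos hε hden)
  have hη1 : η ≤ 1 := min_le_left _ _
  have hηle : η * (2 * ((b - a) * (A + (b - a)) + 1)) ≤ ε := by
    rw [← le_div_iff₀ hden]
    exact min_le_right _ _
  have hηbound : 1/2 * (A + η * (b - a))^2 ≤ 1/2 * A^2 + ε/2 := by
    have hba : 0 < b - a := by linarith
    nlinarith [mul_pos hη0 hba, sq_nonneg (η * (b - a)), mul_le_of_le_one_left hba.le hη1]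
  set Aη := A + η * (b - a) with hAηdef
  have hAη0 : 0 < Aη := by
    have : 0 < η * (b - a) := mul_pos hη0 (by linarith)
    linarith
  -- choose ρ
  set Q := Aη * (b - a) + (b - a) * Aη / (2 * η) with hQdef
  have hQ0 : 0 < Q := by
    rw [hQdef]
    have h1 : 0 < Aη * (b - a) := mul_pos hAη0 (by linarith)
    have h2 : 0 < (b - a) * Aη / (2 * η) := div_pos (mul_pos (by linarith) hAη0) (by positivity)
    linarith
  set ρ := min 1 (ε / (2 * Q)) with hρdef
  have hρ0 : 0 < ρ := lt_min one_pos (div_pos hε (by linarith))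
  have hρ1 : ρ ≤ 1 := min_le_left _ _
  have hρbound : ρ * Aη * (b - a) + ρ^2 * (b - a) * Aη / (2 * η) ≤ ε/2 := by
    have h1 : ρ ≤ ε / (2 * Q) := min_le_right _ _
    have h2 : ρ * Q ≤ ε / 2 := by
      rw [← le_div_iff₀ hQ0]
      calc ρ ≤ ε / (2 * Q) := h1
        _ = ε / 2 / Q := by rw [div_div]
    have h3 : ρ^2 * ((b - a) * Aη / (2 * η)) ≤ ρ * ((b - a) * Aη / (2 * η)) := by
      apply mul_le_mul_of_nonneg_right _ (le_of_lt (div_pos (mul_pos (by linarith) hAη0) (by positivity)))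
      nlinarith
    calc ρ * Aη * (b - a) + ρ^2 * (b - a) * Aη / (2 * η)
        = ρ * (Aη * (b - a)) + ρ^2 * ((b - a) * Aη / (2 * η)) := by ring
      _ ≤ ρ * (Aη * (b - a)) + ρ * ((b - a) * Aη / (2 * η)) := by linarith
      _ = ρ * Q := by rw [hQdef]; ring
      _ ≤ ε/2 := h2
  -- choose ω
  set ω := min 1 (ρ^2 / (4 * K + 5)) with hωdef
  have hω0 : 0 < ω := lt_min one_pos (div_pos (pow_pos hρ0 2) (by linarith))
  have hω1 : ω ≤ 1 := min_le_left _ _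
  have hωbound : 4 * ω * K + 4 * ω^2 ≤ ρ^2 := by
    have h1 : ω ≤ ρ^2 / (4 * K + 5) := min_le_right _ _
    have h2 : ω * (4 * K + 5) ≤ ρ^2 := by
      rw [← le_div_iff₀ (by positivity)]; exact h1
    nlinarith
  -- uniform continuity
  have huc1 := (isCompact_Icc.uniformContinuousOn_of_continuous hf')
  rw [Metric.uniformContinuousOn_iff] at huc1
  obtain ⟨δ1, hδ1, hclose1⟩ := huc1 ω hω0
  have huc2 := (isCompact_Icc.uniformContinuousOn_of_continuous hg')
  rw [Metric.uniformContinuousOn_iff] at huc2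
  obtain ⟨δ2, hδ2, hclose2⟩ := huc2 ω hω0
  set δ := min δ1 δ2 with hδdef
  have hδ0 : 0 < δ := lt_min hδ1 hδ2
  -- N
  obtain ⟨n₀, hn₀⟩ := exists_nat_gt (Aη / (η * δ))
  filter_upwards [Filter.eventually_ge_atTop (max 1 n₀)] with n hn
  have hn1 : 1 ≤ n := le_trans (le_max_left _ _) hn
  have hnn0 : n₀ ≤ n := le_trans (le_max_right _ _) hn
  have hnpos : (0:ℝ) < n := by exact_mod_cast Nat.lt_of_lt_of_le Nat.zero_lt_one hn1
  set c := Aη / n with hcdef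
  have hc0 : 0 < c := div_pos hAη0 hnpos
  have hnc : (n:ℝ) * c = Aη := by rw [hcdef]; field_simp [hnpos.ne']
  have hmesh : c / η < δ := by
    rw [div_lt_iff₀ hη0]
    have h1 : Aη / (η * δ) < n := lt_of_lt_of_le hn₀ (by exact_mod_cast hnn0)
    have h2 : Aη < n * (η * δ) := by
      rw [div_lt_iff₀ (by positivity)] at h1; linarith
    rw [hcdef, div_lt_iff₀ hnpos]
    linarith
  -- the primitive H of h + η
  set H : ℝ → ℝ := fun x => ∫ t in a..x, (Real.sqrt (|f' t| * g' t) + η) with hHdef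
  have hhc : ContinuousOn (fun t => Real.sqrt (|f' t| * g' t)) (Icc a b) :=
    Real.continuous_sqrt.comp_continuousOn (hf'.abs.mul hg')
  have hhηc : ContinuousOn (fun t => Real.sqrt (|f' t| * g' t) + η) (Icc a b) :=
    hhc.add continuousOn_const
  have hHint : ∀ x ∈ Icc a b, ∀ y ∈ Icc a b,
      IntervalIntegrable (fun t => Real.sqrt (|f' t| * g' t) + η) MeasureTheory.volume x y := by
    intro x hx y hy
    apply ContinuousOn.intervalIntegrable
    exact hhηc.mono (uIcc_subset_Icc hx hy)
  have hHcont : ContinuousOn H (Icc a b) := by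
    have := intervalIntegral.continuousOn_primitive_interval
      (μ := MeasureTheory.volume) (f := fun t => Real.sqrt (|f' t| * g' t) + η) (a := a) (b := b) ?_
    · rwa [uIcc_of_le hab'] at this
    · rw [uIcc_of_le hab']
      exact hhηc.integrableOn_Icc
  have hHa : H a = 0 := intervalIntegral.integral_same
  have hHb : H b = Aη := by
    rw [hHdef]
    simp only
    rw [intervalIntegral.integral_add (hhc.intervalIntegrable_of_Icc hab')
      intervalIntegrable_const, intervalIntegral.integral_const, smul_eq_mul, hAηdef, ← hA]
    ring
  have hHdiff : ∀ x ∈ Icc a b, ∀ y ∈ Icc a b,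
      H y - H x = ∫ t in x..y, (Real.sqrt (|f' t| * g' t) + η) := by
    intro x hx y hy
    exact intervalIntegral.integral_interval_sub_left
      (hHint a (left_mem_Icc.2 hab') y hy) (hHint a (left_mem_Icc.2 hab') x hx)
  have hHgap : ∀ x ∈ Icc a b, ∀ y ∈ Icc a b, x ≤ y → η * (y - x) ≤ H y - H x := by
    intro x hx y hy hxy
    rw [hHdiff x hx y hy]
    calc η * (y - x) = ∫ t in x..y, η := by
          rw [intervalIntegral.integral_const, smul_eq_mul]; ring
      _ ≤ ∫ t in x..y, (Real.sqrt (|f' t| * g' t) + η) := by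
          apply intervalIntegral.integral_mono_on hxy intervalIntegrable_const
            (hHint x hx y hy)
          intro t _
          have := Real.sqrt_nonneg (|f' t| * g' t)
          linarith
  -- the partition points
  have hIVT : ∀ i : ℕ, ∃ x, x ∈ Icc a b ∧ H x = (min i n : ℕ) * c := by
    intro i
    have h1 : ((min i n : ℕ) : ℝ) * c ∈ Icc (H a) (H b) := by
      rw [hHa, hHb]
      constructor
      · positivity
      · calc ((min i n : ℕ) : ℝ) * c ≤ (n : ℝ) * c := by
              apply mul_le_mul_of_nonneg_right _ hc0.le
              exact_mod_cast Nat.min_le_right i n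
          _ = Aη := hnc
    obtain ⟨x, hx, hHx⟩ := intermediate_value_Icc hab' hHcont h1
    exact ⟨x, hx, hHx⟩
  choose τ hτmem hτval using hIVT
  have hτstrict : ∀ x ∈ Icc a b, ∀ y ∈ Icc a b, H x < H y → x < y := by
    intro x hx y hy hlt
    by_contra hxy
    push_neg at hxy
    have := hHgap y hy x hx hxy
    nlinarith [mul_nonneg hη0.le (sub_nonneg.2 hxy)]
  have hτ0 : τ 0 = a := by
    have h1 : H (τ 0) = 0 := by simpa using hτval 0
    by_contra hne'
    have h2 : a < τ 0 := lt_of_le_of_ne (hτmem 0).1 (Ne.symm hne')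
    have := hHgap a (left_mem_Icc.2 hab') (τ 0) (hτmem 0) h2.le
    rw [hHa, h1] at this
    nlinarith [mul_pos hη0 (sub_pos.2 h2)]
  have hτn : τ n = b := by
    have h1 : H (τ n) = Aη := by
      have := hτval n
      rw [min_self] at this
      rw [this, hnc]
    by_contra hne'
    have h2 : τ n < b := lt_of_le_of_ne (hτmem n).2 hne'
    have := hHgap (τ n) (hτmem n) b (right_mem_Icc.2 hab') h2.le
    rw [hHb, h1] at this
    nlinarith [mul_pos hη0 (sub_pos.2 h2)]
  have hτinc : ∀ i < n, τ i < τ (i + 1) := by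
    intro i hi
    apply hτstrict _ (hτmem i) _ (hτmem (i + 1))
    rw [hτval i, hτval (i + 1), Nat.min_eq_left hi.le, Nat.min_eq_left (by omega)]
    have : (i : ℝ) < (i : ℝ) + 1 := by linarith
    push_cast
    nlinarith
  have hτIcc : ∀ i, Icc (τ i) (τ (i + 1)) ⊆ Icc a b :=
    fun i => Icc_subset_Icc (hτmem i).1 (hτmem (i + 1)).2
  have hτint : ∀ i < n, (∫ t in τ i..τ (i + 1), (Real.sqrt (|f' t| * g' t) + η)) = c := by
    intro i hi
    rw [← hHdiff (τ i) (hτmem i) (τ (i + 1)) (hτmem (i + 1)), hτval i, hτval (i + 1),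
      Nat.min_eq_left hi.le, Nat.min_eq_left (by omega)]
    push_cast
    ring
  have hτgap : ∀ i < n, τ (i + 1) - τ i ≤ c / η := by
    intro i hi
    have h1 := hHgap (τ i) (hτmem i) (τ (i + 1)) (hτmem (i + 1)) (hτinc i hi).le
    rw [hHdiff (τ i) (hτmem i) (τ (i + 1)) (hτmem (i + 1)), hτint i hi] at h1
    rw [le_div_iff₀ hη0]
    linarith
  -- per-interval estimate
  have hkey : ∀ i < n,
      (∫ t in τ i..τ (i + 1), f t * g' t)
        - sInf (f '' Icc (τ i) (τ (i + 1))) * (g (τ (i + 1)) - g (τ i))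
      ≤ 1/2 * (c + ρ * (τ (i + 1) - τ i))^2 := by
    intro i hi
    have huv : τ i ≤ τ (i + 1) := (hτinc i hi).le
    have hsub := hτIcc i
    have hΔδ : τ (i + 1) - τ i < δ := lt_of_le_of_lt (hτgap i hi) hmesh
    have hdist : ∀ t ∈ Icc (τ i) (τ (i + 1)), dist t (τ i) < δ := by
      intro t ht
      rw [Real.dist_eq, abs_of_nonneg (by linarith [ht.1] : (0:ℝ) ≤ t - τ i)]
      calc t - τ i ≤ τ (i + 1) - τ i := by linarith [ht.2]
        _ < δ := hΔδ
    have hclosef : ∀ t ∈ Icc (τ i) (τ (i + 1)), |f' t| ≤ |f' (τ i)| + ω := by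
      intro t ht
      have hd := hclose1 t (hsub ht) (τ i) (hsub (left_mem_Icc.2 huv))
        (lt_of_lt_of_le (hdist t ht) (min_le_left _ _))
      rw [Real.dist_eq] at hd
      have h1 := abs_sub_abs_le_abs_sub (f' t) (f' (τ i))
      linarith
    have hclosef' : ∀ t ∈ Icc (τ i) (τ (i + 1)), |f' (τ i)| ≤ |f' t| + ω := by
      intro t ht
      have hd := hclose1 (τ i) (hsub (left_mem_Icc.2 huv)) t (hsub ht)
        (by rw [dist_comm]; exact lt_of_lt_of_le (hdist t ht) (min_le_left _ _))
      rw [Real.dist_eq] at hd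
      have h1 := abs_sub_abs_le_abs_sub (f' (τ i)) (f' t)
      linarith
    have hcloseg : ∀ t ∈ Icc (τ i) (τ (i + 1)), g' t ≤ g' (τ i) + ω := by
      intro t ht
      have hd := hclose2 t (hsub ht) (τ i) (hsub (left_mem_Icc.2 huv))
        (lt_of_lt_of_le (hdist t ht) (min_le_right _ _))
      rw [Real.dist_eq] at hd
      have h1 := le_abs_self (g' t - g' (τ i))
      linarith
    have hcloseg' : ∀ t ∈ Icc (τ i) (τ (i + 1)), g' (τ i) ≤ g' t + ω := by
      intro t ht
      have hd := hclose2 (τ i) (hsub (left_mem_Icc.2 huv)) t (hsub ht)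
        (by rw [dist_comm]; exact lt_of_lt_of_le (hdist t ht) (min_le_right _ _))
      rw [Real.dist_eq] at hd
      have h1 := le_abs_self (g' (τ i) - g' t)
      linarith
    set M := |f' (τ i)| + ω with hMdef
    set G := g' (τ i) + ω with hGdef
    have hM0 : 0 ≤ M := by rw [hMdef]; positivity
    have hG0 : 0 ≤ G := by
      have := hg'0 (τ i) (hsub (left_mem_Icc.2 huv))
      rw [hGdef]; linarith
    have hE := interval_error huv (fun t ht => (hf t (hsub ht)).mono hsub)
      (fun t ht => (hg t (hsub ht)).mono hsub) (hf'.mono hsub) (hg'.mono hsub)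
      (fun t ht => hg'0 t (hsub ht))
      hclosef hcloseg
    refine le_trans hE ?_
    have hpt : ∀ p ∈ Icc (τ i) (τ (i + 1)),
        Real.sqrt (M * G) ≤ Real.sqrt (|f' p| * g' p) + ρ := by
      intro p hp
      have h1 : M ≤ |f' p| + 2 * ω := by rw [hMdef]; linarith [hclosef' p hp]
      have h2 : G ≤ g' p + 2 * ω := by rw [hGdef]; linarith [hcloseg' p hp]
      have hK1' : |f' p| ≤ K := (hK p (hsub hp)).1
      have hK2' : g' p ≤ K := (hK p (hsub hp)).2
      have hgp0 : 0 ≤ g' p := hg'0 p (hsub hp)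
      have hfp0 : 0 ≤ |f' p| := abs_nonneg _
      have hMG : M * G ≤ (Real.sqrt (|f' p| * g' p))^2 + ρ^2 := by
        rw [Real.sq_sqrt (mul_nonneg hfp0 hgp0)]
        exact MG_bound_aux (mul_le_mul h1 h2 hG0 (by positivity)) hfp0 hgp0 hK1' hK2'
          hω0.le hωbound
      calc Real.sqrt (M * G)
          ≤ Real.sqrt ((Real.sqrt (|f' p| * g' p))^2 + ρ^2) := Real.sqrt_le_sqrt hMG
        _ ≤ Real.sqrt ((Real.sqrt (|f' p| * g' p))^2) + Real.sqrt (ρ^2) :=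
            sqrt_add_le' (sq_nonneg _) (sq_nonneg _)
        _ = Real.sqrt (|f' p| * g' p) + ρ := by
            rw [Real.sqrt_sq (Real.sqrt_nonneg _), Real.sqrt_sq hρ0.le]
    have hsqrtle : Real.sqrt (M * G) * (τ (i + 1) - τ i) ≤ c + ρ * (τ (i + 1) - τ i) := by
      have e1 : Real.sqrt (M * G) * (τ (i + 1) - τ i)
          = ∫ p in τ i..τ (i + 1), Real.sqrt (M * G) := by
        rw [intervalIntegral.integral_const, smul_eq_mul]; ring
      have e3 : (∫ p in τ i..τ (i + 1), Real.sqrt (|f' p| * g' p)) ≤ c := by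
        have h4 := hτint i hi
        rw [intervalIntegral.integral_add ((hhc.mono hsub).intervalIntegrable_of_Icc huv)
          intervalIntegrable_const, intervalIntegral.integral_const, smul_eq_mul] at h4
        linarith only [h4, mul_nonneg (sub_nonneg.2 huv) hη0.le]
      rw [e1]
      calc (∫ p in τ i..τ (i + 1), Real.sqrt (M * G))
          ≤ ∫ p in τ i..τ (i + 1), (Real.sqrt (|f' p| * g' p) + ρ) := by
            apply intervalIntegral.integral_mono_on huv intervalIntegrable_const
              (((hhc.mono hsub).add continuousOn_const).intervalIntegrable_of_Icc huv) hpt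
        _ = (∫ p in τ i..τ (i + 1), Real.sqrt (|f' p| * g' p)) + ρ * (τ (i + 1) - τ i) := by
            rw [intervalIntegral.integral_add ((hhc.mono hsub).intervalIntegrable_of_Icc huv)
              intervalIntegrable_const, intervalIntegral.integral_const, smul_eq_mul]; ring
        _ ≤ c + ρ * (τ (i + 1) - τ i) := by linarith
    have hMGsq : M * G = (Real.sqrt (M * G))^2 := (Real.sq_sqrt (mul_nonneg hM0 hG0)).symm
    rw [hMGsq]
    exact sq_step_aux (Real.sqrt_nonneg _) (sub_nonneg.2 huv) hsqrtle
  -- assemble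
  set S := ∑ i ∈ Finset.range n,
      sInf (f '' Icc (τ i) (τ (i + 1))) * (g (τ (i + 1)) - g (τ i)) with hSdef
  have hSle : S ≤ LSopt a b f g n := le_csSup (hbdd n) ⟨τ, hτ0, hτn, hτinc, rfl⟩
  have hIsplit : I = ∑ i ∈ Finset.range n, ∫ t in τ i..τ (i + 1), f t * g' t := by
    have hs := intervalIntegral.sum_integral_adjacent_intervals (a := τ) (n := n)
      (μ := MeasureTheory.volume) (f := fun t => f t * g' t) ?_
    · rw [hτ0, hτn] at hs
      rw [hI, ← hs]
    · intro k hk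
      apply ContinuousOn.intervalIntegrable
      rw [uIcc_of_le (hτinc k hk).le]
      exact (hfc.mul hg').mono (hτIcc k)
  have hIS : I - S ≤ ∑ i ∈ Finset.range n, 1/2 * (c + ρ * (τ (i + 1) - τ i))^2 := by
    rw [hIsplit, hSdef, ← Finset.sum_sub_distrib]
    exact Finset.sum_le_sum (fun i hi => hkey i (Finset.mem_range.mp hi))
  have hΔsum : ∑ i ∈ Finset.range n, (τ (i + 1) - τ i) = b - a := by
    rw [Finset.sum_range_sub τ n, hτ0, hτn]
  have hΔsq : ∑ i ∈ Finset.range n, (τ (i + 1) - τ i)^2 ≤ (c / η) * (b - a) := by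
    calc ∑ i ∈ Finset.range n, (τ (i + 1) - τ i)^2
        ≤ ∑ i ∈ Finset.range n, (c / η) * (τ (i + 1) - τ i) := by
          apply Finset.sum_le_sum
          intro i hi
          have h1 := hτgap i (Finset.mem_range.mp hi)
          have h2 := (hτinc i (Finset.mem_range.mp hi)).le
          rw [sq]
          exact mul_le_mul_of_nonneg_right h1 (by linarith only [h2])
      _ = (c / η) * (b - a) := by rw [← Finset.mul_sum, hΔsum]
  have hsum2 : ∑ i ∈ Finset.range n, 1/2 * (c + ρ * (τ (i + 1) - τ i))^2
      = n * (c^2/2) + c * ρ * (b - a)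
        + ρ^2/2 * ∑ i ∈ Finset.range n, (τ (i + 1) - τ i)^2 := by
    have hexp : ∀ x : ℝ, 1/2 * (c + ρ * x)^2 = c^2/2 + c * ρ * x + ρ^2/2 * x^2 :=
      fun x => by ring
    simp only [hexp]
    rw [Finset.sum_add_distrib, Finset.sum_add_distrib, Finset.sum_const,
      Finset.card_range, ← Finset.mul_sum, ← Finset.mul_sum, hΔsum, nsmul_eq_mul]
  have hfinal : (n:ℝ) * (I - S)
      ≤ 1/2 * Aη^2 + (ρ * Aη * (b - a) + ρ^2 * (b - a) * Aη / (2 * η)) := by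
    have h1 : I - S ≤ n * (c^2/2) + c * ρ * (b - a) + ρ^2/2 * ((c / η) * (b - a)) := by
      refine le_trans hIS ?_
      rw [hsum2]
      have := mul_le_mul_of_nonneg_left hΔsq (by positivity : (0:ℝ) ≤ ρ^2/2)
      linarith
    have h2 : (n:ℝ) * (n * (c^2/2) + c * ρ * (b - a) + ρ^2/2 * ((c / η) * (b - a)))
        = 1/2 * ((n:ℝ) * c)^2 + ρ * ((n:ℝ) * c) * (b - a)
          + ρ^2 * (b - a) * ((n:ℝ) * c) / (2 * η) := by
      field_simp
    calc (n:ℝ) * (I - S)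
        ≤ (n:ℝ) * (n * (c^2/2) + c * ρ * (b - a) + ρ^2/2 * ((c / η) * (b - a))) :=
          mul_le_mul_of_nonneg_left h1 hnpos.le
      _ = 1/2 * ((n:ℝ) * c)^2 + ρ * ((n:ℝ) * c) * (b - a)
          + ρ^2 * (b - a) * ((n:ℝ) * c) / (2 * η) := h2
      _ = 1/2 * Aη^2 + (ρ * Aη * (b - a) + ρ^2 * (b - a) * Aη / (2 * η)) := by
          rw [hnc]; ring
  calc (n:ℝ) * (I - LSopt a b f g n) ≤ (n:ℝ) * (I - S) := by
        apply mul_le_mul_of_nonneg_left _ hnpos.le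
        linarith
    _ ≤ 1/2 * Aη^2 + (ρ * Aη * (b - a) + ρ^2 * (b - a) * Aη / (2 * η)) := hfinal
    _ ≤ (1/2 * A^2 + ε/2) + ε/2 := add_le_add hηbound hρbound
    _ = 1/2 * A^2 + ε := by ring
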